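/- For any two stochastic policies π and π' on a finite aperiodic unichain MDP, ρ(π') − ρ(π) ≥ E_{s∼d_π, a∼π'}[Ā^π(s,a)] − 2ζ*·max_s E_{a∼π'}|Ā^π(s,a)|·E_{s∼d_π}[D_TV(π'∥π)[s]], where ζ* = max_π ‖(I − P_π + P*_π)^{-1}‖_∞. -/

import Mathlib

open Finset

/-- A stochastic policy. -/
def IsPolicy {S A : Type*} [Fintype A] (π : S → A → ℝ) : Prop :=
  (∀ s a, 0 ≤ π s a) ∧ ∀ s, ∑ a, π s a = 1

/-- State transition matrix induced by policy π. -/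
def inducedMatrix {S A : Type*} [Fintype A] (P : S → A → S → ℝ) (π : S → A → ℝ) :
    Matrix S S ℝ :=
  Matrix.of fun s s' => ∑ a, π s a * P s a s'

/-- Stationary distribution of the chain induced by a policy (unichain case). -/
def IsStationaryPolicy {S A : Type*} [Fintype S] [Fintype A]
    (P : S → A → S → ℝ) (π : S → A → ℝ) (d : S → ℝ) : Prop :=
  (∀ s, 0 ≤ d s) ∧ (∑ s, d s = 1) ∧
    ∀ s', ∑ s, d s * ∑ a, π s a * P s a s' = d s'

/-- ∞-operator norm of the fundamental matrix Z^π = (I − P_π + P*_π)⁻¹. -/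
noncomputable def fundNorm {S : Type*} [Fintype S] [DecidableEq S] [Nonempty S]
    (Pm : Matrix S S ℝ) (d : S → ℝ) : ℝ :=
  Finset.univ.sup' Finset.univ_nonempty
    (fun s => ∑ s', |((1 - Pm + (Matrix.of fun _ j => d j) : Matrix S S ℝ)⁻¹) s s'|)

/-- aperiodic unichain case:
ρ(π') − ρ(π) ≥ E_{s∼d_π, a∼π'}[Ā^π(s,a)]
  − 2ζ*·max_s E_{a∼π'}|Ā^π(s,a)|·E_{s∼d_π}[D_TV(π'∥π)[s]],
where ζ* = max_π ‖(I − P_π + P*_π)⁻¹‖_∞. -/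
theorem avg_reward_policy_improvement_bound_unichain
    {S A : Type*} [Fintype S] [Fintype A] [DecidableEq S] [Nonempty S]
    (P : S → A → S → ℝ) (r : S → A → ℝ)
    (hP_nonneg : ∀ s a s', 0 ≤ P s a s') (hP_sum : ∀ s a, ∑ s', P s a s' = 1)
    (π π' : S → A → ℝ) (hπ : IsPolicy π) (hπ' : IsPolicy π')
    (dπ dπ' : S → ℝ)
    (hd : IsStationaryPolicy P π dπ) (hd' : IsStationaryPolicy P π' dπ')
    -- fundamental matrices exist (aperiodic unichain)
    (hZ : ∀ p d, IsPolicy p → IsStationaryPolicy P p d →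
      IsUnit (1 - inducedMatrix P p + Matrix.of fun _ s' => d s' : Matrix S S ℝ))
    -- average rewards
    (ρπ ρπ' : ℝ)
    (hρ : ρπ = ∑ s, dπ s * ∑ a, π s a * r s a)
    (hρ' : ρπ' = ∑ s, dπ' s * ∑ a, π' s a * r s a)
    -- bias, action-bias and advantage functions of π
    (Vb : S → ℝ) (Qb Ab : S → A → ℝ)
    (hBellman : ∀ s a, Qb s a = r s a - ρπ + ∑ s', P s a s' * Vb s')
    (hAdv : ∀ s a, Ab s a = Qb s a - Vb s)
    -- ζ* = max_π ‖Z^π‖_∞ over stationary policies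
    (ζstar : ℝ)
    (hζ_ub : ∀ p d, IsPolicy p → IsStationaryPolicy P p d →
      fundNorm (inducedMatrix P p) d ≤ ζstar)
    (hζ_mem : ∃ p d, IsPolicy p ∧ IsStationaryPolicy P p d ∧
      fundNorm (inducedMatrix P p) d = ζstar) :
    ρπ' - ρπ ≥ (∑ s, dπ s * ∑ a, π' s a * Ab s a) -
        2 * ζstar *
          (Finset.univ.sup' Finset.univ_nonempty (fun s => ∑ a, π' s a * |Ab s a|)) *
          ∑ s, dπ s * ((1 / 2) * ∑ a, |π' s a - π s a|) := by
  obtain ⟨hπ0, hπ1⟩ := hπ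
  obtain ⟨hπ'0, hπ'1⟩ := hπ'
  obtain ⟨hd0, hd1, hdfix⟩ := hd
  obtain ⟨hd'0, hd'1, hd'fix⟩ := hd'
  classical
  set Pm : Matrix S S ℝ := inducedMatrix P π with hPmdef
  set Pm' : Matrix S S ℝ := inducedMatrix P π' with hPm'def
  have hPmapp : ∀ s s', Pm s s' = ∑ a, π s a * P s a s' := fun s s' => rfl
  have hPm'app : ∀ s s', Pm' s s' = ∑ a, π' s a * P s a s' := fun s s' => rfl
  set M : Matrix S S ℝ := 1 - Pm' + Matrix.of fun _ j => dπ' j with hMdef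
  have hMunit : IsUnit M := hZ π' dπ' ⟨hπ'0, hπ'1⟩ ⟨hd'0, hd'1, hd'fix⟩
  set Z : Matrix S S ℝ := M⁻¹ with hZdef
  have hMZ : M * Z = 1 :=
    Matrix.mul_nonsing_inv _ ((Matrix.isUnit_iff_isUnit_det M).mp hMunit)
  set f : S → ℝ := fun s => ∑ a, π' s a * Ab s a with hf
  set g : S → ℝ := fun s => ∑ a, π' s a * |Ab s a| with hg
  set Mf : ℝ := Finset.univ.sup' Finset.univ_nonempty g with hMfdef
  set δ : S → ℝ := fun s => dπ' s - dπ s with hδ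
  set u : S → ℝ := fun t => (∑ s, dπ s * Pm' s t) - dπ t with hu
  -- sum of δ is zero
  have hδsum : ∑ s, δ s = 0 := by
    simp [hδ, Finset.sum_sub_distrib, hd1, hd'1]
  -- δ vecMul M = u
  have hδM : Matrix.vecMul δ M = u := by
    funext s'
    have hPstat' : ∑ t, dπ' t * Pm' t s' = dπ' s' := by
      simpa [hPm'app] using hd'fix s'
    have hδP : ∑ t, δ t * Pm' t s' = dπ' s' - ∑ t, dπ t * Pm' t s' := by
      simp [hδ, sub_mul, Finset.sum_sub_distrib, hPstat']
    simp only [Matrix.vecMul, dotProduct, hMdef, Matrix.add_apply,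
      Matrix.sub_apply, Matrix.one_apply, Matrix.of_apply]
    have hexp : ∀ t, δ t * ((if t = s' then (1:ℝ) else 0) - Pm' t s' + dπ' s')
        = (if t = s' then δ t else 0) - δ t * Pm' t s' + δ t * dπ' s' := by
      intro t; split_ifs <;> ring
    rw [Finset.sum_congr rfl fun t _ => hexp t]
    rw [Finset.sum_add_distrib, Finset.sum_sub_distrib, Finset.sum_ite_eq' Finset.univ s' δ,
      ← Finset.sum_mul, hδsum, hδP]
    simp [hu, hδ]
  have hδZ : ∀ s, δ s = ∑ t, u t * Z t s := by
    have h2 : δ = Matrix.vecMul u Z := by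
      rw [← hδM, Matrix.vecMul_vecMul, hMZ, Matrix.vecMul_one]
    intro s
    rw [h2]
    simp [Matrix.vecMul, dotProduct]
  -- performance difference lemma
  have hfs : ∀ s, f s = (∑ a, π' s a * r s a) - ρπ
      + (∑ s', Pm' s s' * Vb s') - Vb s := by
    intro s
    have h1 : ∀ a, π' s a * Ab s a
        = π' s a * r s a - π' s a * ρπ + π' s a * (∑ s', P s a s' * Vb s')
          - π' s a * Vb s := by
      intro a; rw [hAdv, hBellman]; ring
    have h2 : ∑ a, π' s a * (∑ s', P s a s' * Vb s') = ∑ s', Pm' s s' * Vb s' := by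
      simp_rw [hPm'app, Finset.mul_sum, Finset.sum_mul]
      rw [Finset.sum_comm]
      apply Finset.sum_congr rfl; intro s' _
      apply Finset.sum_congr rfl; intro a _
      ring
    simp only [hf]
    rw [Finset.sum_congr rfl fun a _ => h1 a]
    rw [Finset.sum_sub_distrib, Finset.sum_add_distrib, Finset.sum_sub_distrib,
      ← Finset.sum_mul, ← Finset.sum_mul, hπ'1, h2]
    ring
  have hperf : ∑ s, dπ' s * f s = ρπ' - ρπ := by
    have h3 : ∑ s, dπ' s * (∑ s', Pm' s s' * Vb s') = ∑ s, dπ' s * Vb s := by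
      simp_rw [Finset.mul_sum]
      rw [Finset.sum_comm]
      apply Finset.sum_congr rfl; intro s' _
      have : ∑ s, dπ' s * (Pm' s s' * Vb s') = (∑ s, dπ' s * Pm' s s') * Vb s' := by
        rw [Finset.sum_mul]; apply Finset.sum_congr rfl; intro s _; ring
      rw [this]
      have : ∑ s, dπ' s * Pm' s s' = dπ' s' := by simpa [hPm'app] using hd'fix s'
      rw [this]
    calc ∑ s, dπ' s * f s
        = ∑ s, (dπ' s * (∑ a, π' s a * r s a) - dπ' s * ρπ
            + dπ' s * (∑ s', Pm' s s' * Vb s') - dπ' s * Vb s) := by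
          apply Finset.sum_congr rfl; intro s _; rw [hfs s]; ring
      _ = (∑ s, dπ' s * (∑ a, π' s a * r s a)) - (∑ s, dπ' s) * ρπ
            + (∑ s, dπ' s * (∑ s', Pm' s s' * Vb s')) - ∑ s, dπ' s * Vb s := by
          rw [Finset.sum_sub_distrib, Finset.sum_add_distrib, Finset.sum_sub_distrib,
            ← Finset.sum_mul]
      _ = ρπ' - ρπ := by rw [h3, hd'1, hρ']; ring
  -- nonnegativity facts
  have hg0 : ∀ s, 0 ≤ g s := by
    intro s
    apply Finset.sum_nonneg; intro a _
    exact mul_nonneg (hπ'0 s a) (abs_nonneg _)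
  have hMf0 : 0 ≤ Mf := by
    obtain ⟨s0⟩ := (inferInstance : Nonempty S)
    exact le_trans (hg0 s0) (Finset.le_sup' g (Finset.mem_univ s0))
  have hfle : ∀ s, |f s| ≤ Mf := by
    intro s
    refine le_trans ?_ (Finset.le_sup' g (Finset.mem_univ s))
    simp only [hf, hg]
    refine le_trans (Finset.abs_sum_le_sum_abs _ _) ?_
    apply Finset.sum_le_sum; intro a _
    rw [abs_mul, abs_of_nonneg (hπ'0 s a)]
  have hζ0 : 0 ≤ ζstar := by
    obtain ⟨p, d, hp, hdp, heq⟩ := hζ_mem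
    rw [← heq]
    obtain ⟨s0⟩ := (inferInstance : Nonempty S)
    refine le_trans ?_ (Finset.le_sup' _ (Finset.mem_univ s0))
    exact Finset.sum_nonneg fun _ _ => abs_nonneg _
  have hZrow : ∀ t, ∑ s, |Z t s| ≤ ζstar := by
    intro t
    have h := hζ_ub π' dπ' ⟨hπ'0, hπ'1⟩ ⟨hd'0, hd'1, hd'fix⟩
    refine le_trans ?_ h
    unfold fundNorm
    rw [← hPm'def, ← hMdef]
    exact Finset.le_sup' (fun s => ∑ s', |(M⁻¹) s s'|) (Finset.mem_univ t)
  -- bound on ∑ |u t|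
  have hu2 : ∀ t, u t = ∑ s, dπ s * ∑ a, (π' s a - π s a) * P s a t := by
    intro t
    have hstat : ∑ s, dπ s * Pm s t = dπ t := by simpa [hPmapp] using hdfix t
    simp only [hu]
    rw [← hstat, ← Finset.sum_sub_distrib]
    apply Finset.sum_congr rfl; intro s _
    rw [hPm'app, hPmapp, ← mul_sub, ← Finset.sum_sub_distrib]
    congr 1
    apply Finset.sum_congr rfl; intro a _
    ring
  have hu_bound : ∑ t, |u t| ≤ ∑ s, dπ s * ∑ a, |π' s a - π s a| := by
    calc ∑ t, |u t| ≤ ∑ t, ∑ s, dπ s * ∑ a, |π' s a - π s a| * P s a t := by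
          apply Finset.sum_le_sum; intro t _
          rw [hu2 t]
          refine le_trans (Finset.abs_sum_le_sum_abs _ _) ?_
          apply Finset.sum_le_sum; intro s _
          rw [abs_mul, abs_of_nonneg (hd0 s)]
          refine mul_le_mul_of_nonneg_left ?_ (hd0 s)
          refine le_trans (Finset.abs_sum_le_sum_abs _ _) ?_
          apply Finset.sum_le_sum; intro a _
          rw [abs_mul, abs_of_nonneg (hP_nonneg s a t)]
      _ = ∑ s, dπ s * ∑ a, |π' s a - π s a| := by
          rw [Finset.sum_comm]
          apply Finset.sum_congr rfl; intro s _
          rw [← Finset.mul_sum]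
          congr 1
          rw [Finset.sum_comm]
          apply Finset.sum_congr rfl; intro a _
          rw [← Finset.mul_sum, hP_sum, mul_one]
  -- key bound
  have hkey : |∑ s, δ s * f s| ≤ ζstar * Mf * ∑ s, dπ s * ∑ a, |π' s a - π s a| := by
    have h1 : ∑ s, δ s * f s = ∑ t, u t * ∑ s, Z t s * f s := by
      calc ∑ s, δ s * f s = ∑ s, ∑ t, u t * Z t s * f s := by
            apply Finset.sum_congr rfl; intro s _
            rw [hδZ s, Finset.sum_mul]
        _ = ∑ t, ∑ s, u t * Z t s * f s := Finset.sum_comm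
        _ = ∑ t, u t * ∑ s, Z t s * f s := by
            apply Finset.sum_congr rfl; intro t _
            rw [Finset.mul_sum]
            apply Finset.sum_congr rfl; intro s _; ring
    rw [h1]
    calc |∑ t, u t * ∑ s, Z t s * f s| ≤ ∑ t, |u t * ∑ s, Z t s * f s| :=
          Finset.abs_sum_le_sum_abs _ _
      _ ≤ ∑ t, |u t| * (ζstar * Mf) := by
          apply Finset.sum_le_sum; intro t _
          rw [abs_mul]
          refine mul_le_mul_of_nonneg_left ?_ (abs_nonneg _)
          refine le_trans (Finset.abs_sum_le_sum_abs _ _) ?_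
          calc ∑ s, |Z t s * f s| ≤ ∑ s, |Z t s| * Mf := by
                apply Finset.sum_le_sum; intro s _
                rw [abs_mul]
                exact mul_le_mul_of_nonneg_left (hfle s) (abs_nonneg _)
            _ = (∑ s, |Z t s|) * Mf := (Finset.sum_mul _ _ _).symm
            _ ≤ ζstar * Mf := mul_le_mul_of_nonneg_right (hZrow t) hMf0
      _ = (∑ t, |u t|) * (ζstar * Mf) := (Finset.sum_mul _ _ _).symm
      _ ≤ (∑ s, dπ s * ∑ a, |π' s a - π s a|) * (ζstar * Mf) :=
          mul_le_mul_of_nonneg_right hu_bound (mul_nonneg hζ0 hMf0)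
      _ = ζstar * Mf * ∑ s, dπ s * ∑ a, |π' s a - π s a| := by ring
  -- finish
  have hdiff : ρπ' - ρπ - ∑ s, dπ s * f s = ∑ s, δ s * f s := by
    rw [← hperf, ← Finset.sum_sub_distrib]
    apply Finset.sum_congr rfl; intro s _
    simp [hδ]; ring
  have hhalf : ∑ s, dπ s * ((1 / 2 : ℝ) * ∑ a, |π' s a - π s a|)
      = (1 / 2) * ∑ s, dπ s * ∑ a, |π' s a - π s a| := by
    rw [Finset.mul_sum]
    apply Finset.sum_congr rfl; intro s _; ring
  have hgoalf : (∑ s, dπ s * ∑ a, π' s a * Ab s a) = ∑ s, dπ s * f s := rfl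
  rw [ge_iff_le, hgoalf, hhalf]
  have habs := (abs_le.mp hkey).1
  linarith [hdiff]
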